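/- Let V be a vector space over a field K and let Δ : V → V ⊗ V and β : V → V be K-linear maps. Set Δ_L := Δ − Δ^op where Δ^op := τ ∘ Δ with τ(a ⊗ b) = b ⊗ a, and let c_β(Λ) := (Λ ⊗ β) ∘ Λ − (β ⊗ Λ) ∘ Λ. Let P₁₃, P₁₂, P₂₃, P₂₁₃, P₂₃₁ be the K-linear maps on V⊗V⊗V given by P₁₃(a⊗b⊗c)=c⊗b⊗a, P₁₂(a⊗b⊗c)=b⊗a⊗c, P₂₃(a⊗b⊗c)=a⊗c⊗b, P₂₁₃(a⊗b⊗c)=b⊗c⊗a, P₂₃₁(a⊗b⊗c)=c⊗a⊗b. Then c_β(Δ_L) = c_β(Δ) − P₁₃ ∘ c_β(Δ) − P₂₁₃ ∘ (β ⊗ Δ) ∘ Δ − P₁₂ ∘ (Δ ⊗ β) ∘ Δ + P₂₃ ∘ (β ⊗ Δ) ∘ Δ + P₂₃₁ ∘ (Δ ⊗ β) ∘ Δ. -/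
import Mathlib


open TensorProduct

section

variable (K V : Type*) [Field K] [AddCommGroup V] [Module K V]

/-- The associator (V ⊗ V) ⊗ V → V ⊗ (V ⊗ V), used to identify the two triple
tensor products. -/
noncomputable def assocL : (V ⊗[K] V) ⊗[K] V →ₗ[K] V ⊗[K] (V ⊗[K] V) :=
  (TensorProduct.assoc K V V V).toLinearMap

/-- P₁₃ : a ⊗ b ⊗ c ↦ c ⊗ b ⊗ a on V ⊗ (V ⊗ V). -/
noncomputable def P13 : V ⊗[K] (V ⊗[K] V) →ₗ[K] V ⊗[K] (V ⊗[K] V) :=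
  assocL K V
    ∘ₗ TensorProduct.map (TensorProduct.comm K V V).toLinearMap LinearMap.id
    ∘ₗ (TensorProduct.comm K V (V ⊗[K] V)).toLinearMap

/-- P₁₂ : a ⊗ b ⊗ c ↦ b ⊗ a ⊗ c on V ⊗ (V ⊗ V). -/
noncomputable def P12 : V ⊗[K] (V ⊗[K] V) →ₗ[K] V ⊗[K] (V ⊗[K] V) :=
  assocL K V
    ∘ₗ TensorProduct.map (TensorProduct.comm K V V).toLinearMap LinearMap.id
    ∘ₗ (TensorProduct.assoc K V V V).symm.toLinearMap

/-- P₂₃ : a ⊗ b ⊗ c ↦ a ⊗ c ⊗ b on V ⊗ (V ⊗ V). -/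
noncomputable def P23 : V ⊗[K] (V ⊗[K] V) →ₗ[K] V ⊗[K] (V ⊗[K] V) :=
  TensorProduct.map LinearMap.id (TensorProduct.comm K V V).toLinearMap

/-- P₂₁₃ : a ⊗ b ⊗ c ↦ b ⊗ c ⊗ a on V ⊗ (V ⊗ V). -/
noncomputable def P213 : V ⊗[K] (V ⊗[K] V) →ₗ[K] V ⊗[K] (V ⊗[K] V) :=
  assocL K V ∘ₗ (TensorProduct.comm K V (V ⊗[K] V)).toLinearMap

/-- P₂₃₁ : a ⊗ b ⊗ c ↦ c ⊗ a ⊗ b on V ⊗ (V ⊗ V). -/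
noncomputable def P231 : V ⊗[K] (V ⊗[K] V) →ₗ[K] V ⊗[K] (V ⊗[K] V) :=
  (TensorProduct.comm K (V ⊗[K] V) V).toLinearMap
    ∘ₗ (TensorProduct.assoc K V V V).symm.toLinearMap

variable {K V}

/-- Δ^op := τ ∘ Δ, the opposite comultiplication. -/
noncomputable def deltaOp (Δ : V →ₗ[K] V ⊗[K] V) : V →ₗ[K] V ⊗[K] V :=
  (TensorProduct.comm K V V).toLinearMap ∘ₗ Δ

/-- The β-coassociator c_β(Λ) := (Λ ⊗ β) ∘ Λ − (β ⊗ Λ) ∘ Λ, with values in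
V ⊗ (V ⊗ V). -/
noncomputable def coassoc (Λ : V →ₗ[K] V ⊗[K] V) (β : V →ₗ[K] V) :
    V →ₗ[K] V ⊗[K] (V ⊗[K] V) :=
  assocL K V ∘ₗ TensorProduct.map Λ β ∘ₗ Λ - TensorProduct.map β Λ ∘ₗ Λ

end

section
variable {K V : Type*} [Field K] [AddCommGroup V] [Module K V]

lemma mapSubLeft (f f' : V →ₗ[K] V ⊗[K] V) (g : V →ₗ[K] V) :
    TensorProduct.map (f - f') g = TensorProduct.map f g - TensorProduct.map f' g := by
  apply TensorProduct.ext'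
  intro x y
  simp [sub_tmul]

lemma mapSubRight (g : V →ₗ[K] V) (f f' : V →ₗ[K] V ⊗[K] V) :
    TensorProduct.map g (f - f') = TensorProduct.map g f - TensorProduct.map g f' := by
  apply TensorProduct.ext'
  intro x y
  simp [tmul_sub]

lemma crossOne (Δ : V →ₗ[K] V ⊗[K] V) (β : V →ₗ[K] V) :
    TensorProduct.map Δ β ∘ₗ (TensorProduct.comm K V V).toLinearMap
      = (TensorProduct.comm K V (V ⊗[K] V)).toLinearMap ∘ₗ TensorProduct.map β Δ := by
  apply TensorProduct.ext'; intro x y; simp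

lemma crossTwo (Δ : V →ₗ[K] V ⊗[K] V) (β : V →ₗ[K] V) :
    TensorProduct.map β Δ ∘ₗ (TensorProduct.comm K V V).toLinearMap
      = (TensorProduct.comm K (V ⊗[K] V) V).toLinearMap ∘ₗ TensorProduct.map Δ β := by
  apply TensorProduct.ext'; intro x y; simp

lemma mapCompLeft (Δ : V →ₗ[K] V ⊗[K] V) (β : V →ₗ[K] V) :
    TensorProduct.map ((TensorProduct.comm K V V).toLinearMap ∘ₗ Δ) β
      = TensorProduct.map (TensorProduct.comm K V V).toLinearMap LinearMap.id
          ∘ₗ TensorProduct.map Δ β := by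
  apply TensorProduct.ext'; intro x y; simp

lemma mapCompRight (Δ : V →ₗ[K] V ⊗[K] V) (β : V →ₗ[K] V) :
    TensorProduct.map β ((TensorProduct.comm K V V).toLinearMap ∘ₗ Δ)
      = TensorProduct.map LinearMap.id (TensorProduct.comm K V V).toLinearMap
          ∘ₗ TensorProduct.map β Δ := by
  apply TensorProduct.ext'; intro x y; simp

lemma p12comp :
    P12 K V ∘ₗ assocL K V
      = assocL K V ∘ₗ TensorProduct.map (TensorProduct.comm K V V).toLinearMap LinearMap.id := by
  apply TensorProduct.ext_threefold; intro x y z; simp [P12, assocL]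

lemma p231comp :
    P231 K V ∘ₗ assocL K V = (TensorProduct.comm K (V ⊗[K] V) V).toLinearMap := by
  apply TensorProduct.ext_threefold; intro x y z; simp [P231, assocL]

lemma p13comp :
    P13 K V ∘ₗ assocL K V
      = TensorProduct.map LinearMap.id (TensorProduct.comm K V V).toLinearMap
          ∘ₗ (TensorProduct.comm K (V ⊗[K] V) V).toLinearMap := by
  apply TensorProduct.ext_threefold; intro x y z; simp [P13, assocL]

end

/-- the expression of the β-coassociator of Δ_L := Δ − Δ^op in terms
of Δ alone. -/
theorem stmt15 {K V : Type*} [Field K] [AddCommGroup V] [Module K V]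
    (Δ : V →ₗ[K] V ⊗[K] V) (β : V →ₗ[K] V) :
    coassoc (Δ - deltaOp Δ) β
      = coassoc Δ β - P13 K V ∘ₗ coassoc Δ β
        - P213 K V ∘ₗ TensorProduct.map β Δ ∘ₗ Δ
        - P12 K V ∘ₗ assocL K V ∘ₗ TensorProduct.map Δ β ∘ₗ Δ
        + P23 K V ∘ₗ TensorProduct.map β Δ ∘ₗ Δ
        + P231 K V ∘ₗ assocL K V ∘ₗ TensorProduct.map Δ β ∘ₗ Δ := by
  simp only [coassoc, deltaOp, mapSubLeft, mapSubRight, mapCompLeft, mapCompRight,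
    LinearMap.comp_sub, LinearMap.sub_comp, LinearMap.comp_assoc]
  simp only [← LinearMap.comp_assoc, crossOne, crossTwo, p12comp, p231comp, p13comp]
  simp only [P13, P12, P23, P213, P231, assocL, LinearMap.comp_assoc]
  abel
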